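/- Let 1 ≤ p, q < ∞, λ > max{1, p/q}, η ∈ (0,1), let G ⊆ 𝔻 be measurable and α ∈ 𝔻. Then there is a constant C > 0, independent of α and G, such that (∫_𝕋 (∫_{G ∩ Δ(α,η)} ((1−|z|²)^λ / |1 − z ξ̄|^λ) dm(z))^{q/p} |dξ|)^{p/q} ≤ C · m(G ∩ Δ(α,η)) · (1−|α|)^{p/q}. -/

import Mathlib

open MeasureTheory Complex Set
open scoped Real ENNReal

noncomputable section

/-- The open unit disc in `ℂ`. -/
def unitDisc : Set ℂ := Metric.ball 0 1

/-- The normalized area Lebesgue measure on `ℂ`. -/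
def mA : Measure ℂ := (ENNReal.ofReal Real.pi)⁻¹ • (volume : Measure ℂ)

/-- The cone-like region `Γ_β(ξ) = {|z| < β} ∪ ⋃_{|z|<β} [z, ξ)`. -/
def coneRegion (β : ℝ) (ξ : ℂ) : Set ℂ :=
  {z : ℂ | ‖z‖ < β} ∪
    ⋃ z ∈ {w : ℂ | ‖w‖ < β},
      {w : ℂ | ∃ t : ℝ, 0 ≤ t ∧ t < 1 ∧ w = (1 - t) * z + t * ξ}

/-- The pseudohyperbolic disc `Δ(α,η)`. -/
def pDisc (α : ℂ) (η : ℝ) : Set ℂ :=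
  {z ∈ unitDisc | ‖(α - z) / (1 - (starRingEnd ℂ) α * z)‖ < η}

/-- The Euclidean disc `Δ_η(α) = {z : |z - α| < η(1-|α|)}`. -/
def eDisc (η : ℝ) (α : ℂ) : Set ℂ :=
  {z : ℂ | ‖z - α‖ < η * (1 - ‖α‖)}

/-- The tent-space expression of `f` with aperture `β`, restricted to a set `G`:
`(∫_𝕋 (∫_{Γ_β(ξ) ∩ G} |f(z)|^p dm(z)/(1-|z|))^{q/p} |dξ|)^{1/q}`. -/
def tentNormOn (p q β : ℝ) (G : Set ℂ) (f : ℂ → ℂ) : ℝ≥0∞ :=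
  (∫⁻ θ in Set.Ioo 0 (2 * Real.pi),
      (∫⁻ z in coneRegion β (Complex.exp (θ * Complex.I)) ∩ G,
          ENNReal.ofReal (‖f z‖ ^ p / (1 - ‖z‖)) ∂mA) ^ (q / p))
    ^ (1 / q)

/-- The tent space (quasi-)norm `‖f‖_{T_p^q}` (aperture `1/2`). -/
def tentNorm (p q : ℝ) (f : ℂ → ℂ) : ℝ≥0∞ := tentNormOn p q (1/2) Set.univ f

/-- `ρ_{p,q}(f) = ((1/2π)∫_0^{2π} (∫_0^1 |f(re^{iθ})|^p dr)^{q/p} dθ)^{1/q}`. -/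
def rho (p q : ℝ) (f : ℂ → ℂ) : ℝ≥0∞ :=
  ((ENNReal.ofReal (2 * Real.pi))⁻¹ *
      ∫⁻ θ in Set.Ioo 0 (2 * Real.pi),
        (∫⁻ r in Set.Ioo (0:ℝ) 1,
            ENNReal.ofReal (‖f ((r : ℂ) * Complex.exp (θ * Complex.I))‖ ^ p))
          ^ (q / p)) ^ (1 / q)

/-- Membership in `RM(p,q)`. -/
def memRM (p q : ℝ) (f : ℂ → ℂ) : Prop :=
  DifferentiableOn ℂ f unitDisc ∧ rho p q f < ⊤

/-- The Pommerenke integration operator `T_g f(z) = ∫_0^z f(ζ) g'(ζ) dζ`. -/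
def Tg (g f : ℂ → ℂ) (z : ℂ) : ℂ :=
  z * ∫ t in Set.Ioo (0:ℝ) 1, f ((t : ℂ) * z) * deriv g ((t : ℂ) * z)

/-- The companion operator `S_g f(z) = ∫_0^z f'(ζ) g(ζ) dζ`. -/
def Sg (g f : ℂ → ℂ) (z : ℂ) : ℂ :=
  z * ∫ t in Set.Ioo (0:ℝ) 1, deriv f ((t : ℂ) * z) * g ((t : ℂ) * z)

/-- Membership in the Bloch space `𝓑`. -/
def memBloch (g : ℂ → ℂ) : Prop :=
  DifferentiableOn ℂ g unitDisc ∧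
    ∃ M : ℝ, ∀ z ∈ unitDisc, ‖deriv g z‖ * (1 - ‖z‖ ^ 2) ≤ M

/-- Membership in `H^∞`. -/
def memHinf (g : ℂ → ℂ) : Prop :=
  DifferentiableOn ℂ g unitDisc ∧ ∃ M : ℝ, ∀ z ∈ unitDisc, ‖g z‖ ≤ M

/-- The set `E_λ(α) = {z ∈ Δ_η(α) : |f(z)|^p ≥ λ |f(α)|^p}`. -/
def Eset (p η : ℝ) (f : ℂ → ℂ) (lam : ℝ) (α : ℂ) : Set ℂ :=
  {z ∈ eDisc η α | lam * ‖f α‖ ^ p ≤ ‖f z‖ ^ p}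

/-- The average `B_λ f(α) = (1/m(E_λ(α))) ∫_{E_λ(α)} |f(z)|^p dm(z)` (in `ℝ≥0∞`). -/
def Bavg (p η : ℝ) (f : ℂ → ℂ) (lam : ℝ) (α : ℂ) : ℝ≥0∞ :=
  (∫⁻ z in Eset p η f lam α, ENNReal.ofReal (‖f z‖ ^ p) ∂mA) /
    mA (Eset p η f lam α)

/-- The derivative variant `E_λ(α) = {z ∈ Δ_η(α) : (1-|z|)^p |f'(z)|^p ≥ λ (1-|α|)^p |f'(α)|^p}`. -/
def EsetD (p η : ℝ) (f : ℂ → ℂ) (lam : ℝ) (α : ℂ) : Set ℂ :=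
  {z ∈ eDisc η α |
    lam * ((1 - ‖α‖) ^ p * ‖deriv f α‖ ^ p) ≤
      (1 - ‖z‖) ^ p * ‖deriv f z‖ ^ p}

/-- The derivative variant of `B_λ f(α)` (in `ℝ≥0∞`). -/
def BavgD (p η : ℝ) (f : ℂ → ℂ) (lam : ℝ) (α : ℂ) : ℝ≥0∞ :=
  (∫⁻ z in EsetD p η f lam α,
      ENNReal.ofReal (‖deriv f z‖ ^ p * (1 - ‖z‖) ^ p) ∂mA) /
    mA (EsetD p η f lam α)

/-- The test functions `f_α(z) = (1-|α|²)^{γ-1/p-1/q} / (1-ᾱz)^γ`. -/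
def testFun (p q γ : ℝ) (α z : ℂ) : ℂ :=
  (((1 - ‖α‖ ^ 2) ^ (γ - 1/p - 1/q) : ℝ) : ℂ) /
    (1 - (starRingEnd ℂ) α * z) ^ (γ : ℂ)

-- helper: from W ≤ x², get 1/x^s ≤ W^(-(s/2))
lemma inv_rpow_le {x W s : ℝ} (hs : 0 < s) (hW : 0 < W) (hx : 0 ≤ x) (h : W ≤ x^2) :
    1 / x ^ s ≤ W ^ (-(s/2)) := by
  have hx2 : (x:ℝ)^2 = x ^ (2:ℝ) := by
    rw [← Real.rpow_natCast x 2]; norm_num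
  have h1 : W ^ (s/2) ≤ (x^2) ^ (s/2) :=
    Real.rpow_le_rpow hW.le h (by positivity)
  have h2 : (x^2) ^ (s/2) = x ^ s := by
    rw [hx2, ← Real.rpow_mul hx]; congr 1; ring
  rw [Real.rpow_neg hW.le, ← one_div]
  apply one_div_le_one_div_of_le (by positivity)
  rw [← h2]; exact h1

-- tail integral
lemma tail_lintegral {a s : ℝ} (ha : 0 < a) (hs : 1 < s) :
    ∫⁻ v in Set.Ioi a, ENNReal.ofReal (v ^ (-s)) = ENNReal.ofReal (a ^ (1-s) / (s-1)) := by
  have hint : IntegrableOn (fun v : ℝ => v ^ (-s)) (Set.Ioi a) :=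
    integrableOn_Ioi_rpow_of_lt (by linarith) ha
  rw [← ofReal_integral_eq_lintegral_ofReal hint]
  · rw [integral_Ioi_rpow_of_lt (by linarith) ha]
    congr 1
    rw [show -s + 1 = 1 - s by ring, show (1:ℝ) - s = -(s-1) by ring, div_neg, neg_div,
      neg_neg]
  · filter_upwards [ae_restrict_mem measurableSet_Ioi] with v hv
    exact Real.rpow_nonneg (le_of_lt (ha.trans hv)) _

lemma absSq_one_sub (r t : ℝ) :
    ‖1 - (r:ℂ) * Complex.exp ((t:ℂ) * Complex.I)‖ ^ 2
      = (1 - r)^2 + 2*r*(1 - Real.cos t) := by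
  rw [Complex.sq_norm, Complex.normSq_apply]
  simp only [Complex.exp_mul_I, Complex.cos_ofReal_re, Complex.cos_ofReal_im,
    Complex.sin_ofReal_re, Complex.sin_ofReal_im, Complex.sub_re,
    Complex.sub_im, Complex.one_re, Complex.one_im, Complex.mul_re, Complex.mul_im,
    Complex.add_re, Complex.add_im, Complex.ofReal_re, Complex.ofReal_im, Complex.I_re,
    Complex.I_im]
  ring_nf
  nlinarith [Real.sin_sq_add_cos_sq t]

lemma one_sub_cos_ge {t : ℝ} (h : |t| ≤ Real.pi) :
    2 * t^2 / Real.pi^2 ≤ 1 - Real.cos t := by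
  have hc : 1 - Real.cos t = 2 * Real.sin (t/2)^2 := by
    have := Real.sin_sq_eq_half_sub (t/2)
    rw [this]; ring_nf
  have hs : |t| / Real.pi ≤ Real.sin (|t| / 2) := by
    have := Real.mul_le_sin (x := |t|/2) (by positivity)
      (by linarith [abs_nonneg t])
    calc |t| / Real.pi = 2 / Real.pi * (|t|/2) := by ring
    _ ≤ Real.sin (|t|/2) := this
  have hsin : Real.sin (|t|/2)^2 = Real.sin (t/2)^2 := by
    rcases abs_cases t with ⟨h1, _⟩ | ⟨h1, _⟩ <;> rw [h1] <;> simp [neg_div, Real.sin_neg]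
  have hπ := Real.pi_pos
  have h2 : (|t|/Real.pi)^2 ≤ Real.sin (t/2)^2 := by
    rw [← hsin]
    have h0 : 0 ≤ |t| / Real.pi := by positivity
    nlinarith
  have h3 : t^2 / Real.pi^2 ≤ Real.sin (t/2)^2 := by
    calc t^2/Real.pi^2 = (|t|/Real.pi)^2 := by rw [div_pow, _root_.sq_abs]
    _ ≤ _ := h2
  have h4 : 2 * t^2 / Real.pi^2 = 2 * (t^2 / Real.pi^2) := by ring
  rw [hc, h4]; linarith

lemma conj_exp_theta (θ : ℝ) :
    (starRingEnd ℂ) (Complex.exp ((θ:ℂ) * Complex.I)) = Complex.exp (-(θ:ℂ) * Complex.I) := by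
  rw [← Complex.exp_conj]
  congr 1
  simp [map_mul, Complex.conj_ofReal, Complex.conj_I]

lemma abs_sq_kernel (α : ℂ) (θ : ℝ) :
    ‖1 - α * (starRingEnd ℂ) (Complex.exp ((θ:ℂ) * Complex.I))‖ ^ 2
      = (1 - ‖α‖)^2 + 2 * ‖α‖ * (1 - Real.cos (α.arg - θ)) := by
  have h1 : α * (starRingEnd ℂ) (Complex.exp ((θ:ℂ) * Complex.I))
      = ((‖α‖ : ℝ):ℂ) * Complex.exp ((↑(α.arg - θ):ℂ) * Complex.I) := by
    conv_lhs => rw [← Complex.norm_mul_exp_arg_mul_I α]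
    rw [conj_exp_theta, mul_assoc, ← Complex.exp_add]
    congr 2
    push_cast
    ring
  rw [h1]
  exact absSq_one_sub _ _

lemma FRbody {a s : ℝ} (ha : 0 < a) (hs : 1 < s) :
    (∫⁻ θ in Set.Icc (-a) a, ENNReal.ofReal ((a^2 + θ^2/Real.pi^2) ^ (-(s/2))))
      ≤ ENNReal.ofReal (2 * a^(1-s)) := by
  have hpt : ∀ v : ℝ, ENNReal.ofReal ((a^2 + v^2/Real.pi^2) ^ (-(s/2)))
      ≤ ENNReal.ofReal (a^(-s)) := by
    intro v
    apply ENNReal.ofReal_le_ofReal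
    have h1 : (a^2 + v^2/Real.pi^2)^(-(s/2)) ≤ (a^2)^(-(s/2)) :=
      Real.rpow_le_rpow_of_nonpos (by positivity)
        (le_add_of_nonneg_right (by positivity)) (by linarith)
    have h2 : ((a:ℝ)^2)^(-(s/2)) = a^(-s) := by
      rw [show (a:ℝ)^2 = a^(2:ℝ) by rw [← Real.rpow_natCast a 2]; norm_num,
        ← Real.rpow_mul ha.le]
      congr 1; ring
    linarith
  calc (∫⁻ θ in Set.Icc (-a) a, ENNReal.ofReal ((a^2 + θ^2/Real.pi^2) ^ (-(s/2))))
      ≤ ∫⁻ _θ in Set.Icc (-a) a, ENNReal.ofReal (a^(-s)) := lintegral_mono fun v => hpt v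
    _ = ENNReal.ofReal (a^(-s)) * volume (Set.Icc (-a) a) := setLIntegral_const _ _
    _ = ENNReal.ofReal (a^(-s)) * ENNReal.ofReal (a - -a) := by rw [Real.volume_Icc]
    _ = ENNReal.ofReal (a^(-s) * (a - -a)) := by
        rw [← ENNReal.ofReal_mul (by positivity)]
    _ ≤ ENNReal.ofReal (2 * a^(1-s)) := by
        apply ENNReal.ofReal_le_ofReal
        have h3 : a^(-s) * (a - -a) = 2 * (a^(-s) * a^(1:ℝ)) := by rw [Real.rpow_one]; ring
        rw [h3, ← Real.rpow_add ha, show -s + 1 = 1 - s by ring]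

lemma FRtail {a s : ℝ} (ha : 0 < a) (hs : 1 < s) :
    (∫⁻ θ in Set.Ioi a, ENNReal.ofReal ((a^2 + θ^2/Real.pi^2) ^ (-(s/2))))
      ≤ ENNReal.ofReal (Real.pi^s * (a^(1-s)/(s-1))) := by
  have hπ := Real.pi_pos
  have hπs : (0:ℝ) < Real.pi^s := Real.rpow_pos_of_pos hπ s
  calc (∫⁻ θ in Set.Ioi a, ENNReal.ofReal ((a^2 + θ^2/Real.pi^2) ^ (-(s/2))))
      ≤ ∫⁻ v in Set.Ioi a, ENNReal.ofReal (Real.pi^s * v^(-s)) := by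
        apply setLIntegral_mono' measurableSet_Ioi
        intro v hv
        apply ENNReal.ofReal_le_ofReal
        have hv0 : (0:ℝ) < v := ha.trans hv
        have h1 : (a^2 + v^2/Real.pi^2)^(-(s/2)) ≤ (v^2/Real.pi^2)^(-(s/2)) :=
          Real.rpow_le_rpow_of_nonpos (by positivity)
            (le_add_of_nonneg_left (by positivity)) (by linarith)
        have h2 : ((v:ℝ)^2/Real.pi^2)^(-(s/2)) = Real.pi^s * v^(-s) := by
          rw [Real.div_rpow (by positivity) (by positivity),
            show (v:ℝ)^2 = v^(2:ℝ) by rw [← Real.rpow_natCast v 2]; norm_num,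
            show (Real.pi)^2 = Real.pi^(2:ℝ) by rw [← Real.rpow_natCast Real.pi 2]; norm_num,
            ← Real.rpow_mul hv0.le, ← Real.rpow_mul hπ.le,
            show (2:ℝ) * -(s/2) = -s by ring, Real.rpow_neg hπ.le s, div_eq_mul_inv, inv_inv]
          ring
        linarith
    _ = ENNReal.ofReal (Real.pi^s) * ∫⁻ v in Set.Ioi a, ENNReal.ofReal (v^(-s)) := by
        rw [← lintegral_const_mul' _ _ ENNReal.ofReal_ne_top]
        congr 1
        funext v
        rw [← ENNReal.ofReal_mul hπs.le]
    _ = ENNReal.ofReal (Real.pi^s) * ENNReal.ofReal (a^(1-s)/(s-1)) := by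
        rw [tail_lintegral ha hs]
    _ = ENNReal.ofReal (Real.pi^s * (a^(1-s)/(s-1))) := by
        rw [← ENNReal.ofReal_mul hπs.le]

lemma FRIio {a s : ℝ} (ha : 0 < a) :
    (∫⁻ θ in Set.Iio (-a), ENNReal.ofReal ((a^2 + θ^2/Real.pi^2) ^ (-(s/2))))
      = ∫⁻ θ in Set.Ioi a, ENNReal.ofReal ((a^2 + θ^2/Real.pi^2) ^ (-(s/2))) := by
  have hFmeas : Measurable fun v : ℝ => ENNReal.ofReal ((a^2 + v^2/Real.pi^2) ^ (-(s/2))) := by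
    apply Measurable.ennreal_ofReal
    have hcont : Continuous fun v : ℝ => (a^2 + v^2/Real.pi^2) ^ (-(s/2)) := by
      apply Continuous.rpow_const (by continuity)
      intro v; left; positivity
    exact hcont.measurable
  have hmp : MeasurePreserving (Neg.neg : ℝ → ℝ) (volume : Measure ℝ) volume :=
    Measure.measurePreserving_neg _
  have hpre : (Neg.neg : ℝ → ℝ) ⁻¹' (Set.Iio (-a)) = Set.Ioi a := by
    ext x
    simp only [Set.mem_preimage, Set.mem_Iio, Set.mem_Ioi, neg_lt_neg_iff]
  calc (∫⁻ θ in Set.Iio (-a), ENNReal.ofReal ((a^2 + θ^2/Real.pi^2) ^ (-(s/2))))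
      = ∫⁻ x in (Neg.neg : ℝ → ℝ) ⁻¹' (Set.Iio (-a)),
          ENNReal.ofReal ((a^2 + (-x)^2/Real.pi^2) ^ (-(s/2))) :=
        (hmp.setLIntegral_comp_preimage measurableSet_Iio hFmeas).symm
    _ = _ := by rw [hpre]; simp_rw [neg_sq]

lemma FRfull {a s : ℝ} (ha : 0 < a) (hs : 1 < s) :
    (∫⁻ θ : ℝ, ENNReal.ofReal ((a^2 + θ^2/Real.pi^2) ^ (-(s/2))))
      ≤ ENNReal.ofReal ((2 + 2*Real.pi^s/(s-1)) * a^(1-s)) := by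
  have hπ := Real.pi_pos
  have hπs : (0:ℝ) < Real.pi^s := Real.rpow_pos_of_pos hπ s
  have hs1 : (0:ℝ) < s - 1 := by linarith
  have haexp : (0:ℝ) < a ^ (1-s) := Real.rpow_pos_of_pos ha _
  have hcompl : (Set.Icc (-a) a)ᶜ = Set.Iio (-a) ∪ Set.Ioi a := by
    ext x
    simp only [Set.mem_compl_iff, Set.mem_Icc, not_and_or, not_le, Set.mem_union,
      Set.mem_Iio, Set.mem_Ioi]
  rw [← lintegral_add_compl (fun θ : ℝ => ENNReal.ofReal ((a^2 + θ^2/Real.pi^2) ^ (-(s/2))))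
    measurableSet_Icc, hcompl]
  have h2 : (∫⁻ θ in Set.Iio (-a) ∪ Set.Ioi a,
      ENNReal.ofReal ((a^2 + θ^2/Real.pi^2) ^ (-(s/2))))
      ≤ ENNReal.ofReal (Real.pi^s * (a^(1-s)/(s-1)))
        + ENNReal.ofReal (Real.pi^s * (a^(1-s)/(s-1))) := by
    refine le_trans (lintegral_union_le _ _ _) ?_
    rw [FRIio ha]
    exact add_le_add (FRtail ha hs) (FRtail ha hs)
  refine le_trans (add_le_add (FRbody ha hs) h2) ?_
  rw [← ENNReal.ofReal_add (by positivity) (by positivity),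
    ← ENNReal.ofReal_add (by positivity) (by positivity)]
  apply ENNReal.ofReal_le_ofReal
  have hkey : 2*a^(1-s) + (Real.pi^s * (a^(1-s)/(s-1)) + Real.pi^s * (a^(1-s)/(s-1)))
      = (2 + 2*Real.pi^s/(s-1)) * a^(1-s) := by
    field_simp
    ring
  rw [hkey]

set_option maxHeartbeats 1000000 in
lemma FR {s : ℝ} (hs : 1 < s) (α : ℂ) (hα : ‖α‖ < 1) :
    (∫⁻ θ in Set.Ioo 0 (2*Real.pi),
      ENNReal.ofReal (1 / ‖1 - α * (starRingEnd ℂ)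
        (Complex.exp ((θ:ℂ) * Complex.I))‖ ^ s))
    ≤ ENNReal.ofReal ((2*Real.pi*2^s + 4 + 4*Real.pi^s/(s-1)) *
        (1 - ‖α‖) ^ (1-s)) := by
  have hπ := Real.pi_pos
  have hs0 : (0:ℝ) < s := by linarith
  have hs1 : (0:ℝ) < s - 1 := by linarith
  set C : ℝ := 2*Real.pi*2^s + 4 + 4*Real.pi^s/(s-1) with hC
  have h2s : (0:ℝ) < (2:ℝ)^s := Real.rpow_pos_of_pos (by norm_num) s
  have hπs : (0:ℝ) < Real.pi^s := Real.rpow_pos_of_pos hπ s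
  have h7 : (0:ℝ) < 4*Real.pi^s/(s-1) := by positivity
  have hCpos : 0 < C := by rw [hC]; positivity
  set r := ‖α‖ with hr
  have hr0 : 0 ≤ r := norm_nonneg α
  set a := 1 - r with haa
  have ha : 0 < a := by simp only [haa]; linarith
  have ha1 : a ≤ 1 := by simp only [haa]; linarith
  have haexp : (0:ℝ) < a ^ (1-s) := Real.rpow_pos_of_pos ha _
  rcases lt_or_ge r (1/2) with hhalf | hhalf
  · -- easy case : r < 1/2
    have hpt : ∀ θ : ℝ, (1:ℝ) / ‖1 - α * (starRingEnd ℂ)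
        (Complex.exp ((θ:ℂ) * Complex.I))‖ ^ s ≤ 2^s := by
      intro θ
      have h1 : ‖α * (starRingEnd ℂ) (Complex.exp ((θ:ℂ) * Complex.I))‖ = r := by
        rw [norm_mul, Complex.norm_conj, Complex.norm_exp_ofReal_mul_I, mul_one]
      have h2 : (1:ℝ)/2 ≤ ‖1 - α * (starRingEnd ℂ)
          (Complex.exp ((θ:ℂ) * Complex.I))‖ := by
        have h3 := norm_sub_norm_le (1:ℂ) (α * (starRingEnd ℂ) (Complex.exp ((θ:ℂ) * Complex.I)))
        rw [norm_one, h1] at h3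
        linarith
      have h4 : ((1:ℝ)/2)^s ≤ ‖1 - α * (starRingEnd ℂ)
          (Complex.exp ((θ:ℂ) * Complex.I))‖ ^ s :=
        Real.rpow_le_rpow (by norm_num) h2 hs0.le
      have h5 : ((1:ℝ)/2)^s = 1/2^s := by
        rw [Real.div_rpow (by norm_num) (by norm_num), Real.one_rpow]
      calc (1:ℝ) / ‖_‖ ^ s ≤ 1 / ((1:ℝ)/2)^s :=
            one_div_le_one_div_of_le (by rw [h5]; positivity) h4
      _ = 2^s := by rw [h5, one_div_one_div]
    calc (∫⁻ θ in Set.Ioo 0 (2*Real.pi), ENNReal.ofReal (1 / ‖1 - α * (starRingEnd ℂ)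
          (Complex.exp ((θ:ℂ) * Complex.I))‖ ^ s))
        ≤ ∫⁻ _θ in Set.Ioo 0 (2*Real.pi), ENNReal.ofReal ((2:ℝ)^s) :=
          lintegral_mono fun θ => ENNReal.ofReal_le_ofReal (hpt θ)
      _ = ENNReal.ofReal ((2:ℝ)^s) * volume (Set.Ioo 0 (2*Real.pi)) := setLIntegral_const _ _
      _ = ENNReal.ofReal ((2:ℝ)^s) * ENNReal.ofReal (2*Real.pi - 0) := by rw [Real.volume_Ioo]
      _ = ENNReal.ofReal ((2:ℝ)^s * (2*Real.pi)) := by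
          rw [← ENNReal.ofReal_mul h2s.le, sub_zero]
      _ ≤ ENNReal.ofReal (C * a ^ (1-s)) := by
          apply ENNReal.ofReal_le_ofReal
          have h6 : (1:ℝ) ≤ a ^ (1-s) :=
            Real.one_le_rpow_of_pos_of_le_one_of_nonpos ha ha1 (by linarith)
          have h8 := mul_le_mul_of_nonneg_left h6 hCpos.le
          rw [hC] at h8 ⊢
          nlinarith
  · -- main case : 1/2 ≤ r
    set φ := α.arg with hφ
    set F : ℝ → ℝ≥0∞ := fun v => ENNReal.ofReal ((a^2 + v^2/Real.pi^2) ^ (-(s/2))) with hF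
    have hFmeas : Measurable F := by
      apply Measurable.ennreal_ofReal
      have hcont : Continuous fun v : ℝ => (a^2 + v^2/Real.pi^2) ^ (-(s/2)) := by
        apply Continuous.rpow_const (by continuity)
        intro v; left; positivity
      exact hcont.measurable
    have key : ∀ θ ∈ Set.Ioo (0:ℝ) (2*Real.pi),
        ENNReal.ofReal (1 / ‖1 - α * (starRingEnd ℂ)
          (Complex.exp ((θ:ℂ) * Complex.I))‖ ^ s)
          ≤ F (θ - φ) + F (θ - φ - 2*Real.pi) := by
      intro θ hθ
      have habs0 : 0 ≤ ‖1 - α * (starRingEnd ℂ)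
          (Complex.exp ((θ:ℂ) * Complex.I))‖ := norm_nonneg _
      have hsq := abs_sq_kernel α θ
      rw [← hφ, ← hr, ← haa] at hsq
      have hφ1 : -Real.pi < φ := Complex.neg_pi_lt_arg α
      have hφ2 : φ ≤ Real.pi := Complex.arg_le_pi α
      have h2r : (1:ℝ) ≤ 2*r := by linarith
      rcases le_or_gt (-Real.pi) (φ - θ) with hcase | hcase
      · have htp : |φ - θ| ≤ Real.pi := abs_le.mpr ⟨hcase, by linarith [hθ.1]⟩
        have hcos := one_sub_cos_ge htp
        have hX : (0:ℝ) ≤ 2*(φ-θ)^2/Real.pi^2 := by positivity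
        have hX2 : 2*(φ-θ)^2/Real.pi^2 = 2*((φ-θ)^2/Real.pi^2) := by ring
        have hcosn : 0 ≤ 1 - Real.cos (φ - θ) := by
          rw [hX2] at hX; linarith [hcos, hX]
        have hprod : 0 ≤ (2*r - 1) * (1 - Real.cos (φ - θ)) :=
          mul_nonneg (by linarith) hcosn
        have h5 : a^2 + (θ-φ)^2/Real.pi^2
            ≤ ‖1 - α * (starRingEnd ℂ)
              (Complex.exp ((θ:ℂ) * Complex.I))‖ ^ 2 := by
          rw [hsq]
          have he : (θ-φ)^2 = (φ-θ)^2 := by ring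
          rw [he]
          nlinarith [hcos, hprod, hX]
        have h6 := inv_rpow_le hs0 (by positivity) habs0 h5
        refine le_trans (ENNReal.ofReal_le_ofReal h6) ?_
        exact le_self_add
      · have htp : |φ - θ + 2*Real.pi| ≤ Real.pi := by
          rw [abs_le]
          constructor
          · linarith [hθ.2]
          · linarith
        have hcos := one_sub_cos_ge htp
        have hcoseq : Real.cos (φ - θ + 2*Real.pi) = Real.cos (φ - θ) :=
          Real.cos_add_two_pi _
        rw [hcoseq] at hcos
        have hX : (0:ℝ) ≤ 2*(φ-θ+2*Real.pi)^2/Real.pi^2 := by positivity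
        have hX2 : 2*(φ-θ+2*Real.pi)^2/Real.pi^2 = 2*((φ-θ+2*Real.pi)^2/Real.pi^2) := by ring
        have hcosn : 0 ≤ 1 - Real.cos (φ - θ) := by
          rw [hX2] at hX; linarith [hcos, hX]
        have hprod : 0 ≤ (2*r - 1) * (1 - Real.cos (φ - θ)) :=
          mul_nonneg (by linarith) hcosn
        have h5 : a^2 + (θ-φ-2*Real.pi)^2/Real.pi^2
            ≤ ‖1 - α * (starRingEnd ℂ)
              (Complex.exp ((θ:ℂ) * Complex.I))‖ ^ 2 := by
          rw [hsq]
          have he : (θ-φ-2*Real.pi)^2 = (φ-θ+2*Real.pi)^2 := by ring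
          rw [he]
          nlinarith [hcos, hprod, hX]
        have h6 := inv_rpow_le hs0 (by positivity) habs0 h5
        refine le_trans (ENNReal.ofReal_le_ofReal h6) ?_
        exact le_add_self
    calc (∫⁻ θ in Set.Ioo 0 (2*Real.pi),
        ENNReal.ofReal (1 / ‖1 - α * (starRingEnd ℂ)
          (Complex.exp ((θ:ℂ) * Complex.I))‖ ^ s))
        ≤ ∫⁻ θ in Set.Ioo 0 (2*Real.pi), (F (θ - φ) + F (θ - φ - 2*Real.pi)) :=
          setLIntegral_mono' measurableSet_Ioo key
      _ ≤ ∫⁻ θ, (F (θ - φ) + F (θ - φ - 2*Real.pi)) := setLIntegral_le_lintegral _ _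
      _ = (∫⁻ θ, F (θ - φ)) + ∫⁻ θ, F (θ - φ - 2*Real.pi) :=
          lintegral_add_left (hFmeas.comp (measurable_id.sub_const φ)) _
      _ = (∫⁻ θ, F θ) + ∫⁻ θ, F θ := by
          rw [lintegral_sub_right_eq_self (fun θ => F θ) φ]
          congr 1
          have hsub : ∀ θ : ℝ, θ - φ - 2*Real.pi = θ - (φ + 2*Real.pi) := fun θ => by ring
          simp_rw [hsub]
          exact lintegral_sub_right_eq_self (fun θ => F θ) (φ + 2*Real.pi)
      _ = 2 * ∫⁻ θ, F θ := (two_mul _).symm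
      _ ≤ 2 * ENNReal.ofReal ((2 + 2*Real.pi^s/(s-1)) * a^(1-s)) :=
          mul_le_mul_right (FRfull ha hs) 2
      _ = ENNReal.ofReal (2 * ((2 + 2*Real.pi^s/(s-1)) * a^(1-s))) := by
          rw [ENNReal.ofReal_mul (by norm_num : (0:ℝ) ≤ 2), ENNReal.ofReal_ofNat]
      _ ≤ ENNReal.ofReal (C * a ^ (1-s)) := by
          apply ENNReal.ofReal_le_ofReal
          rw [hC]
          have heq : 2 * ((2 + 2*Real.pi^s/(s-1)) * a^(1-s))
              = (4 + 4*Real.pi^s/(s-1)) * a^(1-s) := by ring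
          rw [heq]
          have h8 : (0:ℝ) ≤ 2*Real.pi*2^s := by positivity
          apply mul_le_mul_of_nonneg_right _ haexp.le
          linarith

lemma measurable_pDisc (α : ℂ) (η : ℝ) : MeasurableSet (pDisc α η) := by
  have h1 : MeasurableSet unitDisc := measurableSet_ball
  have h2 : Measurable fun z : ℂ => ‖(α - z) / (1 - (starRingEnd ℂ) α * z)‖ := by
    apply Measurable.comp continuous_norm.measurable
    apply Measurable.div
    · exact (measurable_const.sub measurable_id)
    · exact (measurable_const.sub (measurable_const.mul measurable_id))

  have : pDisc α η = unitDisc ∩ (fun z : ℂ => ‖(α - z) / (1 - (starRingEnd ℂ) α * z)‖) ⁻¹' (Set.Iio η) := rfl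
  rw [this]
  exact h1.inter (h2 measurableSet_Iio)

lemma pd_identity (α z : ℂ) :
    ‖1 - (starRingEnd ℂ) α * z‖^2 - ‖α - z‖^2
      = (1 - ‖α‖^2) * (1 - ‖z‖^2) := by
  rw [Complex.sq_norm, Complex.sq_norm, Complex.sq_norm, Complex.sq_norm]
  simp only [Complex.normSq_apply, Complex.sub_re, Complex.sub_im, Complex.mul_re,
    Complex.mul_im, Complex.one_re, Complex.one_im, Complex.conj_re, Complex.conj_im]
  ring

set_option maxHeartbeats 1000000 in
lemma pdisc_bounds {η : ℝ} (hη0 : 0 < η) (hη1 : η < 1) {α z : ℂ}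
    (hα : ‖α‖ < 1) (hz : ‖z‖ < 1)
    (hmem : ‖(α - z) / (1 - (starRingEnd ℂ) α * z)‖ < η) :
    ‖z - α‖ ≤ 2/(1-η) * (1 - ‖α‖)
    ∧ (1-η^2)/4 * (1 - ‖α‖) ≤ 1 - ‖z‖ := by
  have hα0 : 0 ≤ ‖α‖ := norm_nonneg α
  have hz0 : 0 ≤ ‖z‖ := norm_nonneg z
  have hN0 : 0 ≤ ‖α - z‖ := norm_nonneg _
  have hDlow : 1 - ‖α‖ ≤ ‖1 - (starRingEnd ℂ) α * z‖ := by
    have h1 := norm_sub_norm_le (1:ℂ) ((starRingEnd ℂ) α * z)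
    rw [norm_one, norm_mul, Complex.norm_conj] at h1
    nlinarith
  have hD0 : 0 < ‖1 - (starRingEnd ℂ) α * z‖ := by linarith
  have hN : ‖α - z‖ < η * ‖1 - (starRingEnd ℂ) α * z‖ := by
    rw [norm_div, div_lt_iff₀ hD0] at hmem
    linarith [hmem]
  have hdec : (1:ℂ) - (starRingEnd ℂ) α * z
      = (((1 - ‖α‖^2 : ℝ)):ℂ) + (starRingEnd ℂ) α * (α - z) := by
    have hmc : (starRingEnd ℂ) α * α = ((‖α‖ ^2 : ℝ) : ℂ) := by
      rw [mul_comm, Complex.mul_conj, Complex.normSq_eq_norm_sq]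
    push_cast
    rw [mul_sub, hmc]
    push_cast
    ring
  have hDup : ‖1 - (starRingEnd ℂ) α * z‖
      ≤ (1 - ‖α‖^2) + ‖α‖ * ‖α - z‖ := by
    calc ‖1 - (starRingEnd ℂ) α * z‖
        ≤ ‖(((1 - ‖α‖^2 : ℝ)):ℂ)‖
          + ‖(starRingEnd ℂ) α * (α - z)‖ := by
          rw [hdec]; exact norm_add_le _ _
      _ = |1 - ‖α‖^2| + ‖α‖ * ‖α - z‖ := by
          rw [Complex.norm_real, Real.norm_eq_abs, norm_mul, Complex.norm_conj]
      _ = (1 - ‖α‖^2) + ‖α‖ * ‖α - z‖ := by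
          rw [_root_.abs_of_nonneg (by nlinarith)]
  have hNb : ‖α - z‖ ≤ 2/(1-η) * (1 - ‖α‖) := by
    have h2 : ‖α - z‖ < η * ((1 - ‖α‖^2)
        + ‖α‖ * ‖α - z‖) := by
      calc ‖α - z‖ < η * ‖1 - (starRingEnd ℂ) α * z‖ := hN
      _ ≤ _ := mul_le_mul_of_nonneg_left hDup hη0.le
    have hp1 : 0 ≤ η * ‖α - z‖ * (1 - ‖α‖) :=
      mul_nonneg (mul_nonneg hη0.le hN0) (by linarith)
    have h3 : (1-η) * ‖α - z‖ ≤ η * (1 - ‖α‖^2) := by nlinarith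
    have hp2 : 0 ≤ (1-η) * (1 - ‖α‖^2) :=
      mul_nonneg (by linarith) (by nlinarith)
    have hp3 : (0:ℝ) ≤ (1 - ‖α‖)^2 := sq_nonneg _
    have h4 : η * (1 - ‖α‖^2) ≤ 2 * (1 - ‖α‖) := by nlinarith
    rw [div_mul_eq_mul_div, le_div_iff₀ (by linarith)]
    nlinarith
  constructor
  · rw [show z - α = -(α - z) by ring, norm_neg]
    exact hNb
  · have hid := pd_identity α z
    have hsq : ‖α - z‖^2 ≤ η^2 * ‖1 - (starRingEnd ℂ) α * z‖^2 := by
      nlinarith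
    have h5 : (1-η^2) * ‖1 - (starRingEnd ℂ) α * z‖^2
        ≤ (1 - ‖α‖^2) * (1 - ‖z‖^2) := by nlinarith
    have hD2 : (1 - ‖α‖)^2 ≤ ‖1 - (starRingEnd ℂ) α * z‖^2 :=
      pow_le_pow_left₀ (by linarith) hDlow 2
    have h6 : (1-η^2) * (1 - ‖α‖)^2
        ≤ (1 - ‖α‖^2) * (1 - ‖z‖^2) := by
      have h7 : (1-η^2) * (1 - ‖α‖)^2
          ≤ (1-η^2) * ‖1 - (starRingEnd ℂ) α * z‖^2 :=
        mul_le_mul_of_nonneg_left hD2 (by nlinarith)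
      linarith
    have f1 : 1 - ‖α‖^2 ≤ 2*(1-‖α‖) := by nlinarith [sq_nonneg (1 - ‖α‖)]
    have f2 : 1 - ‖z‖^2 ≤ 2*(1-‖z‖) := by nlinarith [sq_nonneg (1 - ‖z‖)]
    have f3 : (0:ℝ) ≤ 1 - ‖z‖^2 := by nlinarith
    have f4 : (0:ℝ) ≤ 1 - ‖α‖ := by linarith
    have e1 : (1 - ‖α‖^2) * (1 - ‖z‖^2)
        ≤ 4 * ((1-‖α‖) * (1 - ‖z‖)) := by
      calc (1 - ‖α‖^2) * (1 - ‖z‖^2)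
          ≤ 2*(1-‖α‖) * (1 - ‖z‖^2) :=
            mul_le_mul_of_nonneg_right f1 f3
        _ ≤ 2*(1-‖α‖) * (2*(1 - ‖z‖)) :=
            mul_le_mul_of_nonneg_left f2 (by linarith)
        _ = 4 * ((1-‖α‖) * (1 - ‖z‖)) := by ring
    have hA1 : 0 < 1 - ‖α‖ := by linarith
    rw [div_mul_eq_mul_div, div_le_iff₀ (by norm_num : (0:ℝ) < 4)]
    nlinarith [h6, e1, hA1]

set_option maxHeartbeats 1000000 in
lemma kernel_pointwise {η lam : ℝ} (hη0 : 0 < η) (hη1 : η < 1) (hlam : 0 < lam)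
    {α z : ℂ} (hα : ‖α‖ < 1) (hz : ‖z‖ < 1)
    (hb1 : ‖z - α‖ ≤ 2/(1-η) * (1 - ‖α‖))
    (hb2 : (1-η^2)/4 * (1 - ‖α‖) ≤ 1 - ‖z‖)
    {ξ : ℂ} (hξ : ‖ξ‖ = 1) :
    (1 - ‖z‖ ^ 2) ^ lam / ‖1 - z * ξ‖ ^ lam
      ≤ ((2 + 4/(1-η)) * (1 + 8/((1-η)*(1-η^2))))^lam
        * ((1 - ‖α‖)^lam * (1 / ‖1 - α * ξ‖ ^ lam)) := by
  have hη2 : (0:ℝ) < 1 - η := by linarith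
  have hη3 : (0:ℝ) < 1 - η^2 := by nlinarith
  have hα0 : 0 ≤ ‖α‖ := norm_nonneg α
  have hz0 : 0 ≤ ‖z‖ := norm_nonneg z
  have hA1 : (0:ℝ) < 1 - ‖α‖ := by linarith
  have hZ1 : (0:ℝ) < 1 - ‖z‖ := by linarith
  set A0 : ℝ := 2 + 4/(1-η) with hA0
  set K0 : ℝ := 1 + 8/((1-η)*(1-η^2)) with hK0
  have hA0pos : 0 < A0 := by rw [hA0]; positivity
  have hK0pos : 0 < K0 := by rw [hK0]; positivity
  -- |1 - z ξ| ≥ 1 - |z|, |1 - α ξ| ≥ 1 - |α|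
  have hDz : 1 - ‖z‖ ≤ ‖1 - z * ξ‖ := by
    have h1 := norm_sub_norm_le (1:ℂ) (z * ξ)
    rw [norm_one, norm_mul, hξ, mul_one] at h1
    linarith
  have hDα : 1 - ‖α‖ ≤ ‖1 - α * ξ‖ := by
    have h1 := norm_sub_norm_le (1:ℂ) (α * ξ)
    rw [norm_one, norm_mul, hξ, mul_one] at h1
    linarith
  have hDz0 : 0 < ‖1 - z * ξ‖ := by linarith
  have hDα0 : 0 < ‖1 - α * ξ‖ := by linarith
  -- numerator bound
  have hnum : 1 - ‖z‖^2 ≤ A0 * (1 - ‖α‖) := by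
    have h1 : ‖α‖ - ‖z‖ ≤ ‖z - α‖ := by
      have := norm_sub_norm_le α z
      calc ‖α‖ - ‖z‖ ≤ ‖α - z‖ := this
      _ = ‖z - α‖ := by rw [show α - z = -(z - α) by ring, norm_neg]
    have h2 : 1 - ‖z‖ ≤ (1 + 2/(1-η)) * (1 - ‖α‖) := by nlinarith
    have h3 : 1 - ‖z‖^2 ≤ 2 * (1 - ‖z‖) := by nlinarith [sq_nonneg (1 - ‖z‖)]
    rw [hA0]
    calc 1 - ‖z‖^2 ≤ 2 * (1 - ‖z‖) := h3
    _ ≤ 2 * ((1 + 2/(1-η)) * (1 - ‖α‖)) := by linarith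
    _ = (2 + 4/(1-η)) * (1 - ‖α‖) := by ring
  -- denominator bound : |1 - α ξ| ≤ K0 |1 - z ξ|
  have hden : ‖1 - α * ξ‖ ≤ K0 * ‖1 - z * ξ‖ := by
    have h1 : ‖1 - α * ξ‖ ≤ ‖1 - z * ξ‖ + ‖z - α‖ := by
      calc ‖1 - α * ξ‖ = ‖(1 - z * ξ) + (z - α) * ξ‖ := by ring_nf
      _ ≤ ‖1 - z * ξ‖ + ‖(z - α) * ξ‖ := norm_add_le _ _
      _ = ‖1 - z * ξ‖ + ‖z - α‖ := by rw [norm_mul, hξ, mul_one]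
    have h2 : 1 - ‖α‖ ≤ 4/(1-η^2) * (1 - ‖z‖) := by
      rw [div_mul_eq_mul_div, le_div_iff₀ hη3]
      nlinarith
    have h3 : ‖z - α‖ ≤ 8/((1-η)*(1-η^2)) * ‖1 - z * ξ‖ := by
      calc ‖z - α‖ ≤ 2/(1-η) * (1 - ‖α‖) := hb1
      _ ≤ 2/(1-η) * (4/(1-η^2) * (1 - ‖z‖)) :=
          mul_le_mul_of_nonneg_left h2 (by positivity)
      _ = 8/((1-η)*(1-η^2)) * (1 - ‖z‖) := by field_simp; ring
      _ ≤ 8/((1-η)*(1-η^2)) * ‖1 - z * ξ‖ :=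
          mul_le_mul_of_nonneg_left hDz (by positivity)
    rw [hK0]
    calc ‖1 - α * ξ‖ ≤ ‖1 - z * ξ‖ + ‖z - α‖ := h1
    _ ≤ ‖1 - z * ξ‖ + 8/((1-η)*(1-η^2)) * ‖1 - z * ξ‖ := by linarith
    _ = (1 + 8/((1-η)*(1-η^2))) * ‖1 - z * ξ‖ := by ring
  -- rpow estimates
  have hnum' : (1 - ‖z‖^2) ^ lam ≤ (A0 * (1 - ‖α‖)) ^ lam :=
    Real.rpow_le_rpow (by nlinarith) hnum hlam.le
  have hden' : (‖1 - α * ξ‖ / K0) ^ lam ≤ ‖1 - z * ξ‖ ^ lam :=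
    Real.rpow_le_rpow (by positivity) (by rw [div_le_iff₀ hK0pos]; linarith [hden]) hlam.le
  have hdpos : (0:ℝ) < (‖1 - α * ξ‖ / K0) ^ lam :=
    Real.rpow_pos_of_pos (by positivity) _
  calc (1 - ‖z‖ ^ 2) ^ lam / ‖1 - z * ξ‖ ^ lam
      ≤ (A0 * (1 - ‖α‖)) ^ lam / (‖1 - α * ξ‖ / K0) ^ lam :=
        div_le_div₀ (by positivity) hnum' hdpos hden'
    _ = (A0 * K0)^lam * ((1 - ‖α‖)^lam * (1 / ‖1 - α * ξ‖ ^ lam)) := by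
        rw [Real.mul_rpow hA0pos.le hA1.le, Real.div_rpow hDα0.le hK0pos.le,
          Real.mul_rpow (by positivity) hK0pos.le]
        rw [div_div_eq_mul_div]
        field_simp

set_option maxHeartbeats 1000000 in
/-- the kernel estimate
`(∫_𝕋 (∫_{G ∩ Δ(α,η)} (1-|z|²)^λ/|1-zξ̄|^λ dm(z))^{q/p} |dξ|)^{p/q}
  ≤ C m(G ∩ Δ(α,η)) (1-|α|)^{p/q}` with `C` independent of `α` and `G`. -/
theorem kernel_estimate (p q lam : ℝ) (hp : 1 ≤ p) (hq : 1 ≤ q)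
    (hlam : max 1 (p / q) < lam) (η : ℝ) (hη : η ∈ Set.Ioo (0:ℝ) 1) :
    ∃ C > (0:ℝ), ∀ G : Set ℂ, MeasurableSet G → G ⊆ unitDisc → ∀ α ∈ unitDisc,
      (∫⁻ θ in Set.Ioo 0 (2 * Real.pi),
          (∫⁻ z in G ∩ pDisc α η,
              ENNReal.ofReal ((1 - ‖z‖ ^ 2) ^ lam /
                ‖1 - z * (starRingEnd ℂ) (Complex.exp (θ * Complex.I))‖ ^ lam)
                ∂mA) ^ (q / p)) ^ (p / q) ≤
        ENNReal.ofReal C * mA (G ∩ pDisc α η) *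
          ENNReal.ofReal ((1 - ‖α‖) ^ (p / q)) := by
  obtain ⟨hη0, hη1⟩ := hη
  have hp0 : (0:ℝ) < p := by linarith
  have hq0 : (0:ℝ) < q := by linarith
  have hqp : (0:ℝ) < q / p := by positivity
  have hpq : (0:ℝ) < p / q := by positivity
  have hlam1 : (1:ℝ) < lam := lt_of_le_of_lt (le_max_left _ _) hlam
  have hlam0 : (0:ℝ) < lam := by linarith
  have hη2 : (0:ℝ) < 1 - η := by linarith
  have hη3 : (0:ℝ) < 1 - η^2 := by nlinarith
  set s : ℝ := lam * (q / p) with hsdef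
  have hs1 : 1 < s := by
    have h1 : p / q < lam := lt_of_le_of_lt (le_max_right _ _) hlam
    have h2 : (p/q) * (q/p) < lam * (q/p) := mul_lt_mul_of_pos_right h1 hqp
    have h3 : (p/q) * (q/p) = 1 := by field_simp
    rw [h3] at h2
    exact h2
  set A0 : ℝ := 2 + 4/(1-η) with hA0def
  set K0 : ℝ := 1 + 8/((1-η)*(1-η^2)) with hK0def
  have hA0 : 0 < A0 := by rw [hA0def]; positivity
  have hK0 : 0 < K0 := by rw [hK0def]; positivity
  set C1 : ℝ := (A0 * K0) ^ lam with hC1def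
  have hC1 : 0 < C1 := Real.rpow_pos_of_pos (by positivity) _
  set C3 : ℝ := 2*Real.pi*2^s + 4 + 4*Real.pi^s/(s-1) with hC3def
  have hC3 : 0 < C3 := by
    rw [hC3def]
    have h1 : (0:ℝ) < s - 1 := by linarith
    have h2 : (0:ℝ) < (2:ℝ)^s := Real.rpow_pos_of_pos (by norm_num) _
    have h3 : (0:ℝ) < Real.pi^s := Real.rpow_pos_of_pos Real.pi_pos _
    positivity
  refine ⟨C1 * C3 ^ (p/q), by positivity, ?_⟩
  intro G hG hGsub α hαmem
  have hα : ‖α‖ < 1 := by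
    have := mem_ball_zero_iff.mp hαmem
    exact this
  have hA1 : (0:ℝ) < 1 - ‖α‖ := by linarith
  set S : Set ℂ := G ∩ pDisc α η with hSdef
  have hSm : MeasurableSet S := hG.inter (measurable_pDisc α η)
  have hSfin : mA S ≠ ⊤ := by
    have h1 : mA S ≤ mA (Metric.ball (0:ℂ) 1) :=
      measure_mono (fun x hx => hGsub hx.1)
    refine ne_top_of_le_ne_top ?_ h1
    rw [mA, Measure.smul_apply, smul_eq_mul]
    exact ENNReal.mul_ne_top
      (ENNReal.inv_ne_top.mpr (by simp [Real.pi_pos, ENNReal.ofReal_pos]))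
      measure_ball_lt_top.ne
  have hMfin : (mA S) ^ (q/p) ≠ ⊤ := ENNReal.rpow_ne_top_of_nonneg hqp.le hSfin
  -- step A: bound the inner integral pointwise in θ
  have stepA : ∀ θ : ℝ,
      (∫⁻ z in S, ENNReal.ofReal ((1 - ‖z‖ ^ 2) ^ lam /
          ‖1 - z * (starRingEnd ℂ) (Complex.exp (θ * Complex.I))‖ ^ lam) ∂mA)
      ≤ ENNReal.ofReal (C1 * ((1 - ‖α‖)^lam *
          (1 / ‖1 - α * (starRingEnd ℂ) (Complex.exp (θ * Complex.I))‖ ^ lam)))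
        * mA S := by
    intro θ
    have hξ : ‖(starRingEnd ℂ) (Complex.exp (θ * Complex.I))‖ = 1 := by
      rw [Complex.norm_conj, Complex.norm_exp_ofReal_mul_I]
    calc (∫⁻ z in S, ENNReal.ofReal ((1 - ‖z‖ ^ 2) ^ lam /
          ‖1 - z * (starRingEnd ℂ) (Complex.exp (θ * Complex.I))‖ ^ lam) ∂mA)
        ≤ ∫⁻ _z in S, ENNReal.ofReal (C1 * ((1 - ‖α‖)^lam *
            (1 / ‖1 - α * (starRingEnd ℂ) (Complex.exp (θ * Complex.I))‖ ^ lam)))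
            ∂mA := by
          apply setLIntegral_mono' hSm
          intro z hzS
          apply ENNReal.ofReal_le_ofReal
          obtain ⟨hzU, hzlt⟩ := hzS.2
          have hzabs : ‖z‖ < 1 := by
            have := mem_ball_zero_iff.mp hzU
            exact this
          obtain ⟨hb1, hb2⟩ := pdisc_bounds hη0 hη1 hα hzabs hzlt
          exact kernel_pointwise hη0 hη1 hlam0 hα hzabs hb1 hb2 hξ
      _ = _ := setLIntegral_const _ _
  -- positivity of D θ
  have hD0 : ∀ θ : ℝ, (0:ℝ) < ‖1 - α * (starRingEnd ℂ)
      (Complex.exp (θ * Complex.I))‖ := by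
    intro θ
    have hξ : ‖(starRingEnd ℂ) (Complex.exp (θ * Complex.I))‖ = 1 := by
      rw [Complex.norm_conj, Complex.norm_exp_ofReal_mul_I]
    have h1 := norm_sub_norm_le (1:ℂ) (α * (starRingEnd ℂ) (Complex.exp (θ * Complex.I)))
    rw [norm_one, norm_mul, hξ, mul_one] at h1
    linarith
  -- pointwise real rpow algebra
  have hreal1 : ∀ θ : ℝ, (C1 * ((1 - ‖α‖)^lam *
      (1 / ‖1 - α * (starRingEnd ℂ) (Complex.exp (θ * Complex.I))‖ ^ lam)))^(q/p)
      = (C1^(q/p) * (1 - ‖α‖)^s) *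
        (1 / ‖1 - α * (starRingEnd ℂ) (Complex.exp (θ * Complex.I))‖ ^ s) := by
    intro θ
    set D : ℝ := ‖1 - α * (starRingEnd ℂ) (Complex.exp (θ * Complex.I))‖ with hD
    have hDpos : 0 < D := hD0 θ
    have e1 : (1:ℝ)/D^lam = D^(-lam) := by rw [Real.rpow_neg hDpos.le, one_div]
    have e2 : (1:ℝ)/D^s = D^(-s) := by rw [Real.rpow_neg hDpos.le, one_div]
    rw [e1, e2, Real.mul_rpow hC1.le (by positivity),
      Real.mul_rpow (by positivity) (by positivity),
      ← Real.rpow_mul hA1.le, ← Real.rpow_mul hDpos.le, mul_assoc]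
    congr 2
    rw [hsdef]
    ring
  -- main calculation
  calc (∫⁻ θ in Set.Ioo 0 (2 * Real.pi),
          (∫⁻ z in S, ENNReal.ofReal ((1 - ‖z‖ ^ 2) ^ lam /
              ‖1 - z * (starRingEnd ℂ) (Complex.exp (θ * Complex.I))‖ ^ lam)
              ∂mA) ^ (q / p)) ^ (p / q)
      ≤ (∫⁻ θ in Set.Ioo 0 (2 * Real.pi),
          (ENNReal.ofReal (C1 * ((1 - ‖α‖)^lam *
            (1 / ‖1 - α * (starRingEnd ℂ) (Complex.exp (θ * Complex.I))‖ ^ lam)))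
            * mA S) ^ (q / p)) ^ (p / q) := by
        apply ENNReal.rpow_le_rpow _ hpq.le
        exact lintegral_mono fun θ => ENNReal.rpow_le_rpow (stepA θ) hqp.le
    _ = (∫⁻ θ in Set.Ioo 0 (2 * Real.pi),
          (ENNReal.ofReal (C1^(q/p) * (1 - ‖α‖)^s) *
            ENNReal.ofReal (1 / ‖1 - α * (starRingEnd ℂ)
              (Complex.exp (θ * Complex.I))‖ ^ s)) * (mA S) ^ (q/p)) ^ (p / q) := by
        congr 1
        apply lintegral_congr
        intro θ
        rw [ENNReal.mul_rpow_of_nonneg _ _ hqp.le,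
          ENNReal.ofReal_rpow_of_nonneg (by positivity) hqp.le, hreal1 θ,
          ENNReal.ofReal_mul (by positivity)]
    _ = (ENNReal.ofReal (C1^(q/p) * (1 - ‖α‖)^s) *
          (∫⁻ θ in Set.Ioo 0 (2 * Real.pi),
            ENNReal.ofReal (1 / ‖1 - α * (starRingEnd ℂ)
              (Complex.exp (θ * Complex.I))‖ ^ s)) * (mA S) ^ (q/p)) ^ (p / q) := by
        congr 1
        rw [lintegral_mul_const' _ _ hMfin, lintegral_const_mul' _ _ ENNReal.ofReal_ne_top]
    _ ≤ (ENNReal.ofReal (C1^(q/p) * (1 - ‖α‖)^s) *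
          ENNReal.ofReal (C3 * (1 - ‖α‖) ^ (1-s)) * (mA S) ^ (q/p)) ^ (p / q) := by
        apply ENNReal.rpow_le_rpow _ hpq.le
        apply mul_le_mul_left
        apply mul_le_mul_right
        rw [hC3def]
        exact FR hs1 α hα
    _ = ENNReal.ofReal (C1 * C3 ^ (p/q)) * mA S *
          ENNReal.ofReal ((1 - ‖α‖) ^ (p / q)) := by
        rw [ENNReal.mul_rpow_of_nonneg _ _ hpq.le, ENNReal.mul_rpow_of_nonneg _ _ hpq.le,
          ← ENNReal.rpow_mul, show (q/p)*(p/q) = 1 by field_simp, ENNReal.rpow_one,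
          ENNReal.ofReal_rpow_of_nonneg (by positivity) hpq.le,
          ENNReal.ofReal_rpow_of_nonneg (by positivity) hpq.le]
        have e1 : (C1^(q/p) * (1 - ‖α‖)^s)^(p/q)
            = C1 * (1 - ‖α‖)^lam := by
          rw [Real.mul_rpow (by positivity) (by positivity),
            ← Real.rpow_mul hC1.le, ← Real.rpow_mul hA1.le,
            show (q/p)*(p/q) = 1 by field_simp, Real.rpow_one]
          congr 1
          rw [hsdef]
          field_simp
        have e2 : (C3 * (1 - ‖α‖) ^ (1-s))^(p/q)
            = C3^(p/q) * (1 - ‖α‖) ^ ((1-s)*(p/q)) := by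
          rw [Real.mul_rpow hC3.le (by positivity), ← Real.rpow_mul hA1.le]
        rw [e1, e2]
        have e3 : ENNReal.ofReal (C1 * (1 - ‖α‖)^lam) *
            ENNReal.ofReal (C3^(p/q) * (1 - ‖α‖) ^ ((1-s)*(p/q)))
            = ENNReal.ofReal (C1 * C3^(p/q)) *
              ENNReal.ofReal ((1 - ‖α‖) ^ (p/q)) := by
          rw [← ENNReal.ofReal_mul (by positivity), ← ENNReal.ofReal_mul (by positivity)]
          congr 1
          have e4 : (1 - ‖α‖)^lam * (1 - ‖α‖)^((1-s)*(p/q))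
              = (1 - ‖α‖)^(p/q) := by
            rw [← Real.rpow_add hA1]
            congr 1
            rw [hsdef]
            field_simp
            ring
          calc C1 * (1 - ‖α‖)^lam * (C3^(p/q) * (1 - ‖α‖)^((1-s)*(p/q)))
              = C1 * C3^(p/q) * ((1 - ‖α‖)^lam *
                  (1 - ‖α‖)^((1-s)*(p/q))) := by ring
            _ = C1 * C3^(p/q) * (1 - ‖α‖)^(p/q) := by rw [e4]
        rw [e3, mul_right_comm]
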